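/- Suppose that for all α and all δ the condition (c_D''(α) − 2c_L'(α)) sin(α+δ) + (c_L''(α) + 2c_D'(α)) cos(α+δ) = 0 holds, where c_L, c_D are twice differentiable and independent of δ. Then c_D''(α) = 2c_L'(α) and c_L''(α) = −2c_D'(α) for all α, and the general solution is c_D(α) = b₀ + b₁ sin(2α) − b₂ cos(2α), c_L(α) = b₃ + b₁ cos(2α) + b₂ sin(2α) for constants b₀, b₁, b₂, b₃. If moreover c_D is even, c_L is odd, and c_L(0) = 0, then b₁ = b₃ = 0 and hence c_L(α) = b₂ sin(2α), c_D(α) = (b₀ − b₂) + 2b₂ sin²(α). -/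

import Mathlib

open Real

private lemma deriv_diff_of_contDiff2 (f : ℝ → ℝ) (h : ContDiff ℝ 2 f) :
    Differentiable ℝ (deriv f) := by
  have h2 : ContDiff ℝ (((1:ℕ):ℕ∞)+1) f := by exact_mod_cast h
  exact ((contDiff_succ_iff_deriv.mp h2).2.2).differentiable (by simp)

private lemma const_of_deriv0 (f : ℝ → ℝ) (hf : ∀ x, HasDerivAt f 0 x) (x : ℝ) : f x = f 0 :=
  is_const_of_deriv_eq_zero (fun y => (hf y).differentiableAt) (fun y => (hf y).deriv) x 0

private lemma hasDerivAt_sin2 (x : ℝ) :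
    HasDerivAt (fun α : ℝ => Real.sin (2*α)) (2 * Real.cos (2*x)) x := by
  have h : HasDerivAt (fun α : ℝ => Real.sin (2*α)) (Real.cos (2*x) * (2*1)) x :=
    (Real.hasDerivAt_sin (2*x)).comp x ((hasDerivAt_id x).const_mul 2)
  convert h using 1
  ring

private lemma hasDerivAt_cos2 (x : ℝ) :
    HasDerivAt (fun α : ℝ => Real.cos (2*α)) (-(2 * Real.sin (2*x))) x := by
  have h : HasDerivAt (fun α : ℝ => Real.cos (2*α)) (-Real.sin (2*x) * (2*1)) x :=
    (Real.hasDerivAt_cos (2*x)).comp x ((hasDerivAt_id x).const_mul 2)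
  convert h using 1
  ring

/-- Lemma 4: if the spherical-equivalency condition holds for every `δ`, then
`c_D'' = 2c_L'`, `c_L'' = −2c_D'`, the general solution is the stated family,
and for symmetric shapes (`c_D` even, `c_L` odd, `c_L 0 = 0`) one gets
`c_L = b₂ sin 2α`, `c_D = (b₀ − b₂) + 2b₂ sin²α`. -/
theorem flat_plate_unique
    (cL cD : ℝ → ℝ) (hcL : ContDiff ℝ 2 cL) (hcD : ContDiff ℝ 2 cD)
    (hcond : ∀ (α δ : ℝ),
      (deriv (deriv cD) α - 2 * deriv cL α) * sin (α + δ)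
        + (deriv (deriv cL) α + 2 * deriv cD α) * cos (α + δ) = 0)
    (hD_even : ∀ α, cD (-α) = cD α) (hL_odd : ∀ α, cL (-α) = - cL α)
    (hcL0 : cL 0 = 0) :
    (∀ α, deriv (deriv cD) α = 2 * deriv cL α ∧
          deriv (deriv cL) α = -2 * deriv cD α) ∧
    ∃ b₀ b₁ b₂ b₃ : ℝ,
      (∀ α, cD α = b₀ + b₁ * sin (2 * α) - b₂ * cos (2 * α) ∧
            cL α = b₃ + b₁ * cos (2 * α) + b₂ * sin (2 * α)) ∧
      b₁ = 0 ∧ b₃ = 0 ∧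
      (∀ α, cL α = b₂ * sin (2 * α) ∧
            cD α = (b₀ - b₂) + 2 * b₂ * (sin α) ^ 2) := by
  have hfd : Differentiable ℝ cL := hcL.differentiable (by simp)
  have hgd : Differentiable ℝ cD := hcD.differentiable (by simp)
  have hfd' : Differentiable ℝ (deriv cL) := deriv_diff_of_contDiff2 cL hcL
  have hgd' : Differentiable ℝ (deriv cD) := deriv_diff_of_contDiff2 cD hcD
  -- Step 1: isolate the two coefficients.
  have h1 : ∀ α, deriv (deriv cD) α = 2 * deriv cL α := by
    intro α
    have h := hcond α (π/2 - α)
    have e : α + (π/2 - α) = π/2 := by ring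
    rw [e, Real.sin_pi_div_two, Real.cos_pi_div_two] at h
    linarith
  have h2 : ∀ α, deriv (deriv cL) α = -2 * deriv cD α := by
    intro α
    have h := hcond α (-α)
    have e : α + (-α) = 0 := by ring
    rw [e, Real.sin_zero, Real.cos_zero] at h
    linarith
  refine ⟨fun α => ⟨h1 α, h2 α⟩, ?_⟩
  -- cD even ⇒ deriv cD 0 = 0
  have hg'0 : deriv cD 0 = 0 := by
    have h := deriv_comp_neg cD 0
    have e : (fun y => cD (-y)) = cD := funext hD_even
    rw [e, neg_zero] at h
    linarith
  -- deriv cD = 2 * cL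
  have hgf : ∀ α, deriv cD α = 2 * cL α := by
    have hc : ∀ x, HasDerivAt (fun α => deriv cD α - 2 * cL α) 0 x := by
      intro x
      have hv : HasDerivAt (fun α => deriv cD α - 2 * cL α)
          (deriv (deriv cD) x - 2 * deriv cL x) x :=
        ((hgd' x).hasDerivAt).sub (((hfd x).hasDerivAt).const_mul 2)
      have h0 : deriv (deriv cD) x - 2 * deriv cL x = 0 := by rw [h1 x]; ring
      exact h0 ▸ hv
    intro α
    have h := const_of_deriv0 _ hc α
    simp only [hcL0, hg'0] at h
    linarith
  set b₂ : ℝ := deriv cL 0 / 2 with hb₂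
  set b₀ : ℝ := cD 0 + b₂ with hb₀
  -- the function k = cL - b₂ sin(2·) and its derivative
  set k : ℝ → ℝ := fun α => cL α - b₂ * Real.sin (2*α) with hk_def
  set k' : ℝ → ℝ := fun α => deriv cL α - 2 * b₂ * Real.cos (2*α) with hk'_def
  have hk : ∀ x, HasDerivAt k (k' x) x := by
    intro x
    have := ((hfd x).hasDerivAt).sub ((hasDerivAt_sin2 x).const_mul b₂)
    refine this.congr_deriv ?_
    simp [hk'_def]; ring
  have hk' : ∀ x, HasDerivAt k' (-4 * k x) x := by
    intro x
    have := ((hfd' x).hasDerivAt).sub ((hasDerivAt_cos2 x).const_mul (2*b₂))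
    refine this.congr_deriv ?_
    have := h2 x
    have := hgf x
    simp only [hk_def]
    rw [h2 x, hgf x]
    ring
  have hk0 : k 0 = 0 := by simp [hk_def, hcL0]
  have hk'0 : k' 0 = 0 := by simp [hk'_def, hb₂]; ring
  -- energy argument: k ≡ 0
  have hkzero : ∀ x, k x = 0 := by
    have hE : ∀ x, HasDerivAt (fun α => (k' α)^2 + 4 * (k α)^2) 0 x := by
      intro x
      have hv := ((hk' x).pow 2).add (((hk x).pow 2).const_mul 4)
      refine hv.congr_deriv ?_
      push_cast
      ring
    intro x
    have h := const_of_deriv0 _ hE x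
    rw [hk0, hk'0] at h
    nlinarith [sq_nonneg (k' x), sq_nonneg (k x), h]
  have hLα : ∀ α, cL α = b₂ * Real.sin (2*α) := by
    intro α
    have := hkzero α
    simp only [hk_def] at this
    linarith
  -- cD
  have hDα : ∀ α, cD α = b₀ - b₂ * Real.cos (2*α) := by
    have hc : ∀ x, HasDerivAt (fun α => cD α - (b₀ - b₂ * Real.cos (2*α))) 0 x := by
      intro x
      have hv := ((hgd x).hasDerivAt).sub
        ((hasDerivAt_const x b₀).sub ((hasDerivAt_cos2 x).const_mul b₂))
      refine hv.congr_deriv ?_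
      rw [hgf x, hLα x]
      ring
    intro α
    have h := const_of_deriv0 _ hc α
    simp only [mul_zero, Real.cos_zero, mul_one] at h
    have : cD 0 - (b₀ - b₂) = 0 := by rw [hb₀]; ring
    rw [this] at h
    linarith
  refine ⟨b₀, 0, b₂, 0, ?_, rfl, rfl, ?_⟩
  · intro α
    constructor
    · rw [hDα α]; ring
    · rw [hLα α]; ring
  · intro α
    refine ⟨hLα α, ?_⟩
    rw [hDα α, Real.cos_two_mul]
    linear_combination (-2*b₂) * (Real.sin_sq_add_cos_sq α)
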